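/- Let Σ be a multiplicative subsemigroup of the positive integers and let C_Σ[0,1] be the space of continuous functions f on [0,1] with T_n(f) = f for all n ∈ Σ. If dim C_Σ[0,1] = 1, then the Lebesgue measure is the only continuous (non-atomic) Σ-invariant Borel probability measure on the circle. -/

import Mathlib

open MeasureTheory Set Function

/-- If the space `C_Σ[0,1]` of continuous `Σ`-invariant functions is one-dimensional
(equivalently, since `x ↦ x` belongs to it, every member is a scalar multiple of the
identity), then Lebesgue measure is the only continuous `Σ`-invariant probability measure
on the circle `[0,1)`. -/
theorem lebesgue_unique_of_dim_one (S : Set ℕ)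
    (hsub : ∀ n ∈ S, ∀ m ∈ S, n * m ∈ S) (hpos : ∀ n ∈ S, 0 < n)
    (hdim : ∀ f : ℝ → ℝ, ContinuousOn f (Icc 0 1) →
      (∀ n ∈ S, ∀ x ∈ Icc (0:ℝ) 1,
        ∑ j ∈ Finset.range n, (f ((x + j) / n) - f ((j : ℝ) / n)) = f x) →
      ∃ c : ℝ, ∀ x ∈ Icc (0:ℝ) 1, f x = c * x) :
    ∀ μ : Measure ℝ, IsProbabilityMeasure μ → μ (Ico 0 1) = 1 →
      (∀ z : ℝ, μ {z} = 0) →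
      (∀ n ∈ S, Measure.map (fun x : ℝ => Int.fract (n * x)) μ = μ) →
      μ = volume.restrict (Ico 0 1) := by
  intro μ hprob hfull hcont hinv
  -- the complement of `[0,1)` is `μ`-null
  have h0 : μ (Ico (0:ℝ) 1)ᶜ = 0 := by
    have h := measure_compl (μ := μ) (s := Ico (0:ℝ) 1) measurableSet_Ico (measure_ne_top μ _)
    rw [hfull, measure_univ, tsub_self] at h
    exact h
  have hconc : ∀ s : Set ℝ, μ (s ∩ Ico 0 1) = μ s := fun s => measure_inter_conull h0
  -- the distribution function
  set F : ℝ → ℝ := fun x => (μ (Iic x)).toReal with hFdef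
  have hFcdf : F = ProbabilityTheory.cdf μ :=
    funext fun x => (ProbabilityTheory.cdf_eq_real μ x).symm
  -- continuity of `F`
  have hFcont : Continuous F := by
    rw [hFcdf, continuous_iff_continuousAt]
    intro x
    have hsing : (ProbabilityTheory.cdf μ).measure {x} = 0 := by
      rw [ProbabilityTheory.measure_cdf]; exact hcont x
    rw [StieltjesFunction.measure_singleton] at hsing
    have hle : leftLim (ProbabilityTheory.cdf μ) x ≤ ProbabilityTheory.cdf μ x :=
      (ProbabilityTheory.monotone_cdf μ).leftLim_le le_rfl
    have hzero := ENNReal.ofReal_eq_zero.1 hsing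
    have hleft : leftLim (ProbabilityTheory.cdf μ) x = ProbabilityTheory.cdf μ x := by
      linarith
    have hright : rightLim (ProbabilityTheory.cdf μ) x = ProbabilityTheory.cdf μ x := by
      refine ((ProbabilityTheory.monotone_cdf μ).continuousWithinAt_Ioi_iff_rightLim_eq).1 ?_
      exact ((ProbabilityTheory.cdf μ).right_continuous x).mono Ioi_subset_Ici_self
    exact ((ProbabilityTheory.monotone_cdf μ).continuousAt_iff_leftLim_eq_rightLim).2
      (hleft.trans hright.symm)
  -- increments of `F` are measures of intervals
  have hdiff : ∀ a b : ℝ, a ≤ b → F b - F a = (μ (Ioc a b)).toReal := by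
    intro a b hab
    have hsplit : Iic a ∪ Ioc a b = Iic b := Iic_union_Ioc_eq_Iic hab
    have hm : μ (Iic b) = μ (Iic a) + μ (Ioc a b) := by
      rw [← hsplit, measure_union (Iic_disjoint_Ioc le_rfl) measurableSet_Ioc]
    simp only [hFdef]
    rw [hm, ENNReal.toReal_add (measure_ne_top μ _) (measure_ne_top μ _)]
    ring
  have haux : ∀ (s : Set ℝ) (z : ℝ), μ (s ∪ {z}) = μ s := by
    intro s z
    refine le_antisymm ?_ (measure_mono subset_union_left)
    calc μ (s ∪ {z}) ≤ μ s + μ {z} := measure_union_le _ _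
      _ = μ s := by rw [hcont z, add_zero]
  have hIoc_Ico : ∀ a b : ℝ, μ (Ioc a b) = μ (Ico a b) := by
    intro a b
    rcases le_or_gt b a with h | h
    · rw [Ioc_eq_empty (not_lt.2 h), Ico_eq_empty (not_lt.2 h)]
    · rw [← Ioo_union_right h, ← Ioo_union_left h, haux, haux]
  have hF0 : F 0 = 0 := by
    have hset : Iic (0:ℝ) ∩ Ico 0 1 = {0} := by
      ext y
      simp only [mem_inter_iff, mem_Iic, mem_Ico, mem_singleton_iff]
      constructor
      · rintro ⟨h1, h2, h3⟩; linarith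
      · rintro rfl; norm_num
    have : μ (Iic (0:ℝ)) = 0 := by rw [← hconc, hset]; exact hcont 0
    simp [hFdef, this]
  have hF1 : F 1 = 1 := by
    have h1 : μ (Iic (1:ℝ)) = 1 :=
      le_antisymm prob_le_one (hfull ▸ measure_mono (fun y hy => le_of_lt hy.2))
    simp [hFdef, h1]
  -- the functional equation for `F`
  have hkey : ∀ n ∈ S, ∀ x ∈ Icc (0:ℝ) 1,
      ∑ j ∈ Finset.range n, (F ((x + j) / n) - F ((j : ℝ) / n)) = F x := by
    intro n hn x hx
    obtain ⟨hx0, hx1⟩ := hx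
    have hn0 : (0:ℝ) < n := Nat.cast_pos.2 (hpos n hn)
    have hterm : ∀ j ∈ Finset.range n,
        F ((x + j) / n) - F ((j : ℝ) / n) = (μ (Ico ((j:ℝ)/n) ((x + j)/n))).toReal := by
      intro j _
      rw [hdiff _ _ (by gcongr <;> linarith), hIoc_Ico]
    have hdisj : (↑(Finset.range n) : Set ℕ).PairwiseDisjoint
        (fun j : ℕ => Ico ((j:ℝ)/n) ((x + j)/n)) := by
      have key : ∀ i j : ℕ, i < j →
          Disjoint (Ico ((i:ℝ)/n) ((x + i)/n)) (Ico ((j:ℝ)/n) ((x + j)/n)) := by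
        intro i j hij
        rw [Set.disjoint_left]
        rintro y ⟨-, hy2⟩ ⟨hy3, -⟩
        have hij' : (i:ℝ) + 1 ≤ j := by exact_mod_cast hij
        have : (x + i)/n ≤ (j:ℝ)/n := by gcongr <;> linarith
        linarith
      intro i hi j hj hij
      rcases hij.lt_or_gt with h | h
      · exact key i j h
      · exact (key j i h).symm
    have hset : (⋃ j ∈ Finset.range n, Ico ((j:ℝ)/n) ((x + j)/n))
        = (fun y : ℝ => Int.fract ((n:ℝ) * y)) ⁻¹' (Ico 0 x) ∩ Ico 0 1 := by
      ext y
      simp only [mem_iUnion, Finset.mem_range, mem_inter_iff, mem_preimage, mem_Ico,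
        exists_prop]
      constructor
      · rintro ⟨j, hjn, hy1, hy2⟩
        have hjn' : (j:ℝ) + 1 ≤ n := by exact_mod_cast hjn
        have hy1' : (j:ℝ) ≤ y * n := (div_le_iff₀ hn0).1 hy1
        have hy2' : y * n < x + j := (lt_div_iff₀ hn0).1 hy2
        have hfl : ⌊(n:ℝ) * y⌋ = (j:ℤ) := by
          rw [Int.floor_eq_iff]
          push_cast
          constructor <;> nlinarith
        have hfr : Int.fract ((n:ℝ) * y) = (n:ℝ) * y - j := by
          have h' : Int.fract ((n:ℝ) * y) = (n:ℝ) * y - (⌊(n:ℝ) * y⌋ : ℝ) := rfl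
          rw [h', hfl]
          push_cast
          ring
        have hy0 : 0 ≤ y := le_trans (by positivity) hy1
        have hyn : y < 1 := by
          have : y < (x + j)/n := hy2
          have h2 : (x + j)/n ≤ 1 := by
            rw [div_le_one hn0]; linarith
          linarith
        refine ⟨⟨?_, ?_⟩, hy0, hyn⟩
        · exact Int.fract_nonneg _
        · rw [hfr]; nlinarith
      · rintro ⟨⟨-, hf2⟩, hy0, hy1⟩
        have hny0 : (0:ℝ) ≤ (n:ℝ) * y := by positivity
        have hj0 : 0 ≤ ⌊(n:ℝ) * y⌋ := Int.floor_nonneg.2 hny0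
        have hjn : ⌊(n:ℝ) * y⌋ < (n:ℤ) := by
          rw [Int.floor_lt]
          push_cast
          nlinarith
        refine ⟨⌊(n:ℝ) * y⌋.toNat, by omega, ?_, ?_⟩ <;>
          rw [show ((⌊(n:ℝ) * y⌋.toNat : ℕ) : ℝ) = (⌊(n:ℝ) * y⌋ : ℝ) by
            exact_mod_cast congrArg (Int.cast : ℤ → ℝ) (Int.toNat_of_nonneg hj0)]
        · rw [div_le_iff₀ hn0]
          have := Int.floor_le ((n:ℝ) * y)
          nlinarith
        · rw [lt_div_iff₀ hn0]
          have hfr : Int.fract ((n:ℝ) * y) = (n:ℝ) * y - ⌊(n:ℝ) * y⌋ := rfl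
          rw [hfr] at hf2
          nlinarith
    have hmeas : Measurable (fun y : ℝ => Int.fract ((n:ℝ) * y)) :=
      measurable_fract.comp (measurable_const_mul _)
    have hIcox : μ (Ico (0:ℝ) x) = μ ((fun y : ℝ => Int.fract ((n:ℝ) * y)) ⁻¹' (Ico 0 x)) := by
      conv_lhs => rw [← hinv n hn]
      rw [Measure.map_apply hmeas measurableSet_Ico]
    calc ∑ j ∈ Finset.range n, (F ((x + j) / n) - F ((j : ℝ) / n))
        = ∑ j ∈ Finset.range n, (μ (Ico ((j:ℝ)/n) ((x + j)/n))).toReal :=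
          Finset.sum_congr rfl hterm
      _ = (∑ j ∈ Finset.range n, μ (Ico ((j:ℝ)/n) ((x + j)/n))).toReal :=
          (ENNReal.toReal_sum fun j _ => measure_ne_top μ _).symm
      _ = (μ (⋃ j ∈ Finset.range n, Ico ((j:ℝ)/n) ((x + j)/n))).toReal := by
          rw [measure_biUnion_finset hdisj fun j _ => measurableSet_Ico]
      _ = (μ ((fun y : ℝ => Int.fract ((n:ℝ) * y)) ⁻¹' (Ico 0 x) ∩ Ico 0 1)).toReal := by
          rw [hset]
      _ = (μ (Ico (0:ℝ) x)).toReal := by rw [hconc, ← hIcox]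
      _ = (μ (Ioc (0:ℝ) x)).toReal := by rw [hIoc_Ico]
      _ = F x - F 0 := (hdiff 0 x hx0).symm
      _ = F x := by rw [hF0]; ring
  -- apply the dimension hypothesis
  obtain ⟨c, hc⟩ := hdim F hFcont.continuousOn hkey
  have hc1 : c = 1 := by
    have := hc 1 (by norm_num)
    rw [hF1] at this
    linarith
  have hIic : ∀ x ∈ Icc (0:ℝ) 1, μ (Iic x) = ENNReal.ofReal x := by
    intro x hx
    have h := hc x hx
    rw [hc1, one_mul] at h
    conv_lhs => rw [← ENNReal.ofReal_toReal (measure_ne_top μ (Iic x))]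
    exact congrArg ENNReal.ofReal h
  -- conclude via equality of cdfs
  haveI hνprob : IsProbabilityMeasure (volume.restrict (Ico (0:ℝ) 1)) := by
    constructor
    rw [Measure.restrict_apply_univ, Real.volume_Ico]
    norm_num
  have hν_Iic : ∀ x : ℝ, volume.restrict (Ico (0:ℝ) 1) (Iic x) = volume (Iic x ∩ Ico 0 1) :=
    fun x => Measure.restrict_apply measurableSet_Iic
  have hmain : ∀ x : ℝ, μ (Iic x) = volume.restrict (Ico (0:ℝ) 1) (Iic x) := by
    intro x
    rw [hν_Iic]
    rcases lt_or_ge x 0 with hx | hx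
    · have hempty : Iic x ∩ Ico (0:ℝ) 1 = ∅ := by
        ext y
        simp only [mem_inter_iff, mem_Iic, mem_Ico, mem_empty_iff_false, iff_false, not_and]
        intro h1 h2
        linarith
      rw [← hconc, hempty]
      simp
    rcases le_or_gt x 1 with hx1 | hx1
    · rw [hIic x ⟨hx, hx1⟩]
      refine le_antisymm ?_ ?_
      · calc ENNReal.ofReal x = volume (Ico 0 x) := by rw [Real.volume_Ico, sub_zero]
          _ ≤ volume (Iic x ∩ Ico 0 1) := by
              apply measure_mono
              rintro y ⟨h1, h2⟩
              exact ⟨le_of_lt h2, h1, lt_of_lt_of_le h2 hx1⟩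
      · calc volume (Iic x ∩ Ico 0 1) ≤ volume (Icc 0 x) := by
              apply measure_mono
              rintro y ⟨h1, h2, h3⟩
              exact ⟨h2, h1⟩
          _ = ENNReal.ofReal x := by rw [Real.volume_Icc, sub_zero]
    · have hsub' : Ico (0:ℝ) 1 ⊆ Iic x := fun y hy => le_of_lt (lt_of_lt_of_le hy.2 hx1.le)
      have h1 : μ (Iic x) = 1 := le_antisymm prob_le_one (hfull ▸ measure_mono hsub')
      have h2 : Iic x ∩ Ico (0:ℝ) 1 = Ico 0 1 := inter_eq_self_of_subset_right hsub'
      rw [h1, h2, Real.volume_Ico]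
      norm_num
  exact Measure.ext_of_Iic μ _ hmain
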